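/- Suppose a delay process has counter value c = k > 0 when a token arrives at time t, and its counter resets to C at each release while decrementing otherwise. If subsequent tokens arrive with inter-arrival gaps C+1+t₁, C+1+t₂, ..., C+1+t_ℓ (all tⱼ ≥ 0), then the counter value upon the j-th subsequent arrival is k - Σ_{s≤j} t_s, provided Σ_{s≤j} t_s ≤ k. In particular, if Σ_{s} t_s > k at some point, the counter reaches 0 strictly before a token arrives. -/
import Mathlib

lemma decA (c : ℕ → ℕ) (hdec : ∀ s, 0 < c s → c (s + 1) = c s - 1)
    (t m : ℕ) (h : c t = m) : ∀ i ≤ m, c (t + i) = m - i := by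
  intro i hi
  induction i with
  | zero => simpa using h
  | succ n ih =>
      have hn : n ≤ m := Nat.le_of_succ_le hi
      have hcn := ih hn
      have hpos : 0 < c (t + n) := by omega
      have hstep := hdec (t + n) hpos
      have : t + (n + 1) = t + n + 1 := by omega
      rw [this, hstep]
      omega

lemma stepB (C : ℕ) (c : ℕ → ℕ)
    (hdec : ∀ s, 0 < c s → c (s + 1) = c s - 1)
    (hrel : ∀ s, c s = 0 → c (s + 1) = C)
    (t m tj : ℕ) (hm : c t = m) (hmC : m ≤ C) (htj : tj ≤ m) :
    c (t + (C + 1) + tj) = m - tj := by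
  rcases Nat.eq_zero_or_pos m with h0 | hpos
  · have htj0 : tj = 0 := by omega
    subst h0; subst htj0
    have hC := hrel t hm
    have := decA c hdec (t + 1) C hC C le_rfl
    have heq : t + (C + 1) + 0 = t + 1 + C := by omega
    rw [heq, this]; omega
  · have h1 := decA c hdec t m hm m le_rfl
    have h2 : c (t + m) = 0 := by omega
    have h3 := hrel (t + m) h2
    have h4 := decA c hdec (t + m + 1) C h3 (C - m + tj) (by omega)
    have heq : t + (C + 1) + tj = t + m + 1 + (C - m + tj) := by omega
    rw [heq, h4]; omega

theorem stmt_12 (C k : ℕ) (hk : 0 < k) (hkC : k ≤ C)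
    (c : ℕ → ℕ) (arr tseq : ℕ → ℕ)
    (hdec : ∀ s, 0 < c s → c (s + 1) = c s - 1)
    (hrel : ∀ s, c s = 0 → c (s + 1) = C)
    (hgap : ∀ j, arr (j + 1) = arr j + (C + 1) + tseq j)
    (h0 : c (arr 0) = k) :
    (∀ j : ℕ, (∑ s ∈ Finset.range (j + 1), tseq s) ≤ k →
        c (arr (j + 1)) = k - ∑ s ∈ Finset.range (j + 1), tseq s) ∧
    (∀ j : ℕ, (∑ s ∈ Finset.range j, tseq s) ≤ k →
        k < (∑ s ∈ Finset.range (j + 1), tseq s) →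
        ∃ s : ℕ, arr j ≤ s ∧ s < arr (j + 1) ∧ c s = 0) := by
  have part1 : ∀ j : ℕ, (∑ s ∈ Finset.range (j + 1), tseq s) ≤ k →
      c (arr (j + 1)) = k - ∑ s ∈ Finset.range (j + 1), tseq s := by
    intro j
    induction j with
    | zero =>
        intro hle
        rw [show (0:ℕ)+1 = 1 from rfl, Finset.sum_range_one] at hle ⊢
        rw [hgap 0]
        exact stepB C c hdec hrel (arr 0) k (tseq 0) h0 hkC hle
    | succ n ih =>
        intro hle
        have hsum : ∑ s ∈ Finset.range (n + 1 + 1), tseq s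
            = (∑ s ∈ Finset.range (n + 1), tseq s) + tseq (n + 1) :=
          Finset.sum_range_succ _ _
        have hle' : (∑ s ∈ Finset.range (n + 1), tseq s) ≤ k := by omega
        have hc := ih hle'
        rw [hgap (n + 1), hsum]
        have := stepB C c hdec hrel (arr (n + 1))
          (k - ∑ s ∈ Finset.range (n + 1), tseq s) (tseq (n + 1)) hc
          (by omega) (by omega)
        rw [this]; omega
  refine ⟨part1, ?_⟩
  intro j hle hlt
  have hsum : ∑ s ∈ Finset.range (j + 1), tseq s
      = (∑ s ∈ Finset.range j, tseq s) + tseq j := Finset.sum_range_succ _ _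
  have hc : c (arr j) = k - ∑ s ∈ Finset.range j, tseq s := by
    cases j with
    | zero => simpa using h0
    | succ n =>
        have : (∑ s ∈ Finset.range (n + 1), tseq s) ≤ k := hle
        exact part1 n this
  set m := k - ∑ s ∈ Finset.range j, tseq s with hm
  rcases Nat.eq_zero_or_pos m with h0m | hposm
  · exact ⟨arr j, le_rfl, by rw [hgap j]; omega, by rw [hc, h0m]⟩
  · refine ⟨arr j + m, by omega, by rw [hgap j]; omega, ?_⟩
    have := decA c hdec (arr j) m hc m le_rfl
    omega
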